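/- arXiv:2003.05617 — 3 statements merged into one kernel-verified Lean document; each statement's English description precedes it below -/
import Mathlib

section
/- Let V : ℝ × ℝⁿ → ℝ be continuously differentiable, x : [0,T] → ℝⁿ continuously differentiable, and d, z integrable signals with values in ℝ^{nd}, ℝ^{nz}. Suppose that for all t ∈ [0,T], (d/dt) V(t, x(t)) + z(t)ᵀ M z(t) ≤ d(t)ᵀ d(t) whenever V(t,x(t)) ≤ γ + R². If V(0, x(0)) ≤ γ, ∫₀ᵗ z(τ)ᵀ M z(τ) dτ ≥ 0 for all t ∈ [0,T], and ∫₀ᵀ d(t)ᵀ d(t) dt < R², then V(t, x(t)) ≤ γ + R² for all t ∈ [0,T]. -/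
open MeasureTheory Set Matrix

/-- Invariance argument in the proof of Theorem 1 (hard IQC dissipation):
if the dissipation inequality holds on the sublevel set, the IQC integral is
nonnegative on every finite horizon, and the disturbance energy is below `R^2`,
then trajectories starting in the `γ` sublevel set stay in the `γ + R²` sublevel set. -/
theorem brs_hard_iqc_invariance
    {n nd nz : ℕ} (T γ R : ℝ) (hT : 0 < T) (hR : 0 < R)
    (M : Matrix (Fin nz) (Fin nz) ℝ) (hM : M.IsSymm)
    (V : ℝ × (Fin n → ℝ) → ℝ) (x : ℝ → Fin n → ℝ)
    (d : ℝ → Fin nd → ℝ) (z : ℝ → Fin nz → ℝ)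
    (hV : ContDiff ℝ 1 V) (hx : ContDiff ℝ 1 x)
    (hdint : IntervalIntegrable (fun t => d t ⬝ᵥ d t) volume 0 T)
    (hzint : IntervalIntegrable (fun t => z t ⬝ᵥ M.mulVec (z t)) volume 0 T)
    (hdiss : ∀ t ∈ Icc (0:ℝ) T, V (t, x t) ≤ γ + R ^ 2 →
      deriv (fun s => V (s, x s)) t + z t ⬝ᵥ M.mulVec (z t) ≤ d t ⬝ᵥ d t)
    (h0 : V (0, x 0) ≤ γ)
    (hIQC : ∀ t ∈ Icc (0:ℝ) T, 0 ≤ ∫ τ in (0:ℝ)..t, z τ ⬝ᵥ M.mulVec (z τ))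
    (hE : (∫ t in (0:ℝ)..T, d t ⬝ᵥ d t) < R ^ 2) :
    ∀ t ∈ Icc (0:ℝ) T, V (t, x t) ≤ γ + R ^ 2 := by
  set W : ℝ → ℝ := fun s => V (s, x s) with hWdef
  have hW : ContDiff ℝ 1 W := hV.comp (contDiff_id.prodMk hx)
  have hWc : Continuous W := hW.continuous
  have hW' : Continuous (deriv W) := hW.continuous_deriv le_rfl
  by_contra hcon
  push_neg at hcon
  obtain ⟨t₀, ht₀, ht₀gt⟩ := hcon
  set S : Set ℝ := {t | t ∈ Icc (0:ℝ) T ∧ γ + R ^ 2 < W t} with hSdef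
  have hSne : S.Nonempty := ⟨t₀, ht₀, ht₀gt⟩
  have hSbdd : BddBelow S := ⟨0, fun t ht => ht.1.1⟩
  set T₂ : ℝ := sInf S with hT₂def
  have hT₂cl : T₂ ∈ closure S := csInf_mem_closure hSne hSbdd
  have hclosed : IsClosed {t : ℝ | t ∈ Icc (0:ℝ) T ∧ γ + R ^ 2 ≤ W t} :=
    isClosed_Icc.inter (isClosed_le continuous_const hWc)
  have hT₂mem : T₂ ∈ Icc (0:ℝ) T ∧ γ + R ^ 2 ≤ W T₂ := by
    have hsub : S ⊆ {t : ℝ | t ∈ Icc (0:ℝ) T ∧ γ + R ^ 2 ≤ W t} :=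
      fun t ht => ⟨ht.1, ht.2.le⟩
    exact hclosed.closure_subset_iff.2 hsub hT₂cl
  obtain ⟨hT₂Icc, hT₂ge⟩ := hT₂mem
  -- T₂ > 0
  have hW0 : W 0 ≤ γ := h0
  have hT₂pos : 0 < T₂ := by
    rcases lt_or_eq_of_le hT₂Icc.1 with h | h
    · exact h
    · exfalso
      have : γ + R ^ 2 ≤ W 0 := by rw [← h] at hT₂ge; exact hT₂ge
      nlinarith [sq_nonneg R]
  -- below T₂ the bound holds
  have hbelow : ∀ t, 0 ≤ t → t < T₂ → W t ≤ γ + R ^ 2 := by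
    intro t ht0 htlt
    by_contra h
    push_neg at h
    have htT : t ≤ T := le_trans htlt.le hT₂Icc.2
    exact absurd (csInf_le hSbdd ⟨⟨ht0, htT⟩, h⟩) (not_le.2 htlt)
  -- W T₂ ≤ γ + R² by left limit
  have hT₂le : W T₂ ≤ γ + R ^ 2 := by
    have htend : Filter.Tendsto W (nhdsWithin T₂ (Iio T₂)) (nhds (W T₂)) :=
      (hWc.continuousAt).continuousWithinAt.tendsto
    refine le_of_tendsto htend ?_
    filter_upwards [self_mem_nhdsWithin,
      Ioo_mem_nhdsLT_of_mem ⟨hT₂pos, le_rfl⟩] with t ht hti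
    exact hbelow t hti.1.le ht
  have hIcc : ∀ t ∈ Icc (0:ℝ) T₂, W t ≤ γ + R ^ 2 := by
    intro t ht
    rcases lt_or_eq_of_le ht.2 with h | h
    · exact hbelow t ht.1 h
    · rw [h]; exact hT₂le
  have hsubT : Icc (0:ℝ) T₂ ⊆ Icc (0:ℝ) T := Icc_subset_Icc le_rfl hT₂Icc.2
  -- pointwise derivative bound on [0, T₂]
  have hderiv : ∀ t ∈ Icc (0:ℝ) T₂,
      deriv W t ≤ d t ⬝ᵥ d t - z t ⬝ᵥ M.mulVec (z t) := by
    intro t ht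
    have := hdiss t (hsubT ht) (hIcc t ht)
    linarith
  -- integrability on [0, T₂]
  have huIcc : Set.uIcc (0:ℝ) T₂ ⊆ Set.uIcc (0:ℝ) T := by
    rw [Set.uIcc_of_le hT₂Icc.1, Set.uIcc_of_le hT.le]
    exact hsubT
  have hdint₂ : IntervalIntegrable (fun t => d t ⬝ᵥ d t) volume 0 T₂ :=
    hdint.mono_set huIcc
  have hzint₂ : IntervalIntegrable (fun t => z t ⬝ᵥ M.mulVec (z t)) volume 0 T₂ :=
    hzint.mono_set huIcc
  have hW'int : IntervalIntegrable (deriv W) volume 0 T₂ :=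
    hW'.intervalIntegrable 0 T₂
  -- FTC
  have hftc : (∫ t in (0:ℝ)..T₂, deriv W t) = W T₂ - W 0 :=
    intervalIntegral.integral_deriv_eq_sub
      (fun t _ => hW.differentiable one_ne_zero t) hW'int
  -- integral comparison
  have hmono : (∫ t in (0:ℝ)..T₂, deriv W t)
      ≤ ∫ t in (0:ℝ)..T₂, (d t ⬝ᵥ d t - z t ⬝ᵥ M.mulVec (z t)) :=
    intervalIntegral.integral_mono_on hT₂Icc.1 hW'int (hdint₂.sub hzint₂) hderiv
  have hsplit : (∫ t in (0:ℝ)..T₂, (d t ⬝ᵥ d t - z t ⬝ᵥ M.mulVec (z t)))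
      = (∫ t in (0:ℝ)..T₂, d t ⬝ᵥ d t) - ∫ t in (0:ℝ)..T₂, z t ⬝ᵥ M.mulVec (z t) :=
    intervalIntegral.integral_sub hdint₂ hzint₂
  have hIQC₂ : 0 ≤ ∫ t in (0:ℝ)..T₂, z t ⬝ᵥ M.mulVec (z t) := hIQC T₂ hT₂Icc
  have hdd : (∫ t in (0:ℝ)..T₂, d t ⬝ᵥ d t) ≤ ∫ t in (0:ℝ)..T, d t ⬝ᵥ d t := by
    refine intervalIntegral.integral_mono_interval le_rfl hT₂Icc.1 hT₂Icc.2 ?_ hdint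
    filter_upwards with t
    exact Finset.sum_nonneg fun i _ => mul_self_nonneg _
  have : W T₂ - W 0 < R ^ 2 := by
    rw [← hftc]
    calc (∫ t in (0:ℝ)..T₂, deriv W t)
        ≤ (∫ t in (0:ℝ)..T₂, d t ⬝ᵥ d t) - ∫ t in (0:ℝ)..T₂, z t ⬝ᵥ M.mulVec (z t) := by
          rw [← hsplit]; exact hmono
      _ ≤ ∫ t in (0:ℝ)..T₂, d t ⬝ᵥ d t := by linarith
      _ ≤ ∫ t in (0:ℝ)..T, d t ⬝ᵥ d t := hdd
      _ < R ^ 2 := hE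
  linarith
end

section
/- Let V : [0,T] × ℝⁿ → ℝ be C¹ and x : [0,T] → ℝⁿ be C¹ solving ẋ(t) = F(x(t), w(t), d(t)) with continuous w, d. Suppose for all t ∈ [0,T] with V(t, x(t)) ≤ γ + R² we have ∂ₜV(t,x(t)) + ∇ₓV(t,x(t))·F(x(t),w(t),d(t)) + z(t)ᵀMz(t) ≤ d(t)ᵀd(t), that ∫₀ᵀ ‖d(t)‖² dt < R², that ∫₀ᵗ z(τ)ᵀMz(τ)dτ ≥ 0 for all t ∈ [0,T], and V(0,x(0)) ≤ γ. If additionally {ξ : V(T, ξ) ≤ γ + R²} ⊆ X_T for a set X_T ⊆ ℝⁿ, then x(T) ∈ X_T. -/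
open MeasureTheory Set Matrix

/-- Theorem 1 (hard IQC dissipation reachability) for a single trajectory:
the dissipation inequality, the hard IQC, the disturbance energy bound, and the
target-set containment imply that the trajectory reaches the target set at time `T`. -/
theorem brs_hard_iqc_reach_target
    {n nw nd nz : ℕ} (T γ R : ℝ) (hT : 0 < T) (hR : 0 < R)
    (M : Matrix (Fin nz) (Fin nz) ℝ) (hM : M.IsSymm)
    (V : ℝ × (Fin n → ℝ) → ℝ) (hV : ContDiff ℝ 1 V)
    (F : (Fin n → ℝ) → (Fin nw → ℝ) → (Fin nd → ℝ) → (Fin n → ℝ))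
    (hF : Continuous fun p : (Fin n → ℝ) × (Fin nw → ℝ) × (Fin nd → ℝ) =>
      F p.1 p.2.1 p.2.2)
    (x : ℝ → Fin n → ℝ) (hx : ContDiff ℝ 1 x)
    (w : ℝ → Fin nw → ℝ) (hw : Continuous w)
    (d : ℝ → Fin nd → ℝ) (hd : Continuous d)
    (z : ℝ → Fin nz → ℝ) (hz : Continuous z)
    (hODE : ∀ t ∈ Icc (0:ℝ) T, HasDerivAt x (F (x t) (w t) (d t)) t)
    (hdiss : ∀ t ∈ Icc (0:ℝ) T, V (t, x t) ≤ γ + R ^ 2 →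
      fderiv ℝ V (t, x t) (1, F (x t) (w t) (d t))
        + z t ⬝ᵥ M.mulVec (z t) ≤ d t ⬝ᵥ d t)
    (hE : (∫ t in (0:ℝ)..T, d t ⬝ᵥ d t) < R ^ 2)
    (hIQC : ∀ t ∈ Icc (0:ℝ) T, 0 ≤ ∫ τ in (0:ℝ)..t, z τ ⬝ᵥ M.mulVec (z τ))
    (h0 : V (0, x 0) ≤ γ)
    (XT : Set (Fin n → ℝ))
    (hXT : {ξ : Fin n → ℝ | V (T, ξ) ≤ γ + R ^ 2} ⊆ XT) :
    x T ∈ XT := by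
  set e : ℝ → ℝ := fun t => d t ⬝ᵥ d t with he_def
  set q : ℝ → ℝ := fun t => z t ⬝ᵥ M.mulVec (z t) with hq_def
  have hec : Continuous e := by
    simp only [he_def, dotProduct]
    exact continuous_finset_sum _ fun i _ =>
      ((continuous_apply i).comp hd).mul ((continuous_apply i).comp hd)
  have hqc : Continuous q := by
    simp only [hq_def, dotProduct, Matrix.mulVec]
    exact continuous_finset_sum _ fun i _ =>
      ((continuous_apply i).comp hz).mul (continuous_finset_sum _ fun j _ =>
        continuous_const.mul ((continuous_apply j).comp hz))
  have he0 : ∀ t, 0 ≤ e t := fun t => Finset.sum_nonneg fun i _ => mul_self_nonneg _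
  set φ : ℝ → ℝ := fun t => V (t, x t) with hφ_def
  set ψ : ℝ → ℝ := fun t => fderiv ℝ V (t, x t) (1, F (x t) (w t) (d t)) with hψ_def
  have hφc : Continuous φ :=
    hV.continuous.comp (continuous_id.prodMk hx.continuous)
  have hφ' : ∀ t ∈ Icc (0:ℝ) T, HasDerivAt φ (ψ t) t := by
    intro t ht
    have h1 : HasDerivAt (fun s => (s, x s)) ((1:ℝ), F (x t) (w t) (d t)) t :=
      (hasDerivAt_id t).prodMk (hODE t ht)
    exact (hV.differentiable one_ne_zero (t, x t)).hasFDerivAt.comp_hasDerivAt t h1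
  set I : ℝ → ℝ := fun t => ∫ τ in (0:ℝ)..t, (q τ - e τ) with hI_def
  have hI' : ∀ t, HasDerivAt I (q t - e t) t := fun t =>
    ((hqc.sub hec).integral_hasStrictDerivAt 0 t).hasDerivAt
  have hIsplit : ∀ t : ℝ, I t = (∫ τ in (0:ℝ)..t, q τ) - ∫ τ in (0:ℝ)..t, e τ := by
    intro t
    exact intervalIntegral.integral_sub (hqc.intervalIntegrable 0 t)
      (hec.intervalIntegrable 0 t)
  have hemono : ∀ t ∈ Icc (0:ℝ) T, (∫ τ in (0:ℝ)..t, e τ) ≤ ∫ τ in (0:ℝ)..T, e τ := by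
    intro t ht
    exact intervalIntegral.integral_mono_interval le_rfl ht.1 ht.2
      (Filter.Eventually.of_forall fun τ => he0 τ) (hec.intervalIntegrable 0 T)
  set δ : ℝ := R ^ 2 - ∫ τ in (0:ℝ)..T, e τ with hδ_def
  have hδpos : 0 < δ := by simpa [hδ_def] using hE
  set ε : ℝ := δ / (2 * T) with hε_def
  have hεpos : 0 < ε := div_pos hδpos (by linarith)
  have hεT : ε * T = δ / 2 := by
    rw [hε_def, div_mul_eq_mul_div, div_eq_div_iff (ne_of_gt (by linarith)) (by norm_num)]
    ring
  set G : ℝ → ℝ := fun t => φ t + I t with hG_def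
  have hGc : Continuous G := hφc.add (continuous_iff_continuousAt.2 fun t => (hI' t).continuousAt)
  have hG' : ∀ t ∈ Icc (0:ℝ) T, HasDerivAt G (ψ t + (q t - e t)) t := fun t ht =>
    (hφ' t ht).add (hI' t)
  -- key: if G s ≤ γ + ε * s then φ s < γ + R ^ 2
  have key : ∀ s ∈ Icc (0:ℝ) T, G s ≤ γ + ε * s → φ s < γ + R ^ 2 := by
    intro s hs hGs
    have h1 : 0 ≤ ∫ τ in (0:ℝ)..s, q τ := hIQC s hs
    have h2 : (∫ τ in (0:ℝ)..s, e τ) ≤ R ^ 2 - δ := by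
      have := hemono s hs; linarith [this]
    have h3 : -(R ^ 2 - δ) ≤ I s := by rw [hIsplit s]; linarith
    have h4 : ε * s ≤ δ / 2 := by
      calc ε * s ≤ ε * T := by nlinarith [hs.2, hεpos]
        _ = δ / 2 := hεT
    have : φ s = G s - I s := by simp [hG_def]
    linarith
  have hmain : ∀ ⦃s⦄, s ∈ Icc (0:ℝ) T → G s ≤ γ + ε * s := by
    apply image_le_of_deriv_right_lt_deriv_boundary (f' := fun t => ψ t + (q t - e t))
      (B' := fun _ => ε) hGc.continuousOn
      (fun s hs => (hG' s (Ico_subset_Icc_self hs)).hasDerivWithinAt)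
    · simp only [hG_def, hI_def, intervalIntegral.integral_same, add_zero, mul_zero]
      linarith
    · intro s
      simpa using ((hasDerivAt_id s).const_mul ε).const_add γ
    · intro s hs hGs
      have hs' : s ∈ Icc (0:ℝ) T := Ico_subset_Icc_self hs
      have hφs : φ s ≤ γ + R ^ 2 := (key s hs' (le_of_eq hGs)).le
      have := hdiss s hs' hφs
      have : ψ s + q s ≤ e s := this
      linarith
  have hGT : G T ≤ γ + ε * T := hmain (right_mem_Icc.2 hT.le)
  have hφT : φ T < γ + R ^ 2 := key T (right_mem_Icc.2 hT.le) hGT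
  exact hXT (le_of_lt hφT)
end

section
/- Let V : [0,T] × ℝⁿ → ℝ be C¹, x : [0,T] → ℝⁿ a C¹ trajectory, z, d continuous signals, Y₂₂ ∈ 𝕊^{nψ}, and x_ψ(t) the last nψ components of x(t). Define 𝒱(t, x) := V(t, x) − x_ψᵀ Y₂₂ x_ψ. Assume: (i) for all t ∈ [0,T] with 𝒱(t,x(t)) ≤ γ + R², (d/dt)V(t,x(t)) + z(t)ᵀMz(t) ≤ d(t)ᵀd(t); (ii) V(0,x(0)) ≤ γ; (iii) ∫₀ᵀ ‖d‖² < R²; (iv) ∫₀ᵗ zᵀMz dτ ≥ −x_ψ(t)ᵀ Y₂₂ x_ψ(t) for all t ∈ [0,T]. Then 𝒱(T, x(T)) < γ + R². -/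
open MeasureTheory Set Matrix

/-- Trajectory-level conclusion in the proof of Theorem 3 (soft IQC reachability):
with the shifted storage function `𝒱(t,x) = V(t,x) − x_ψᵀ Y₂₂ x_ψ`, the dissipation
inequality on the `𝒱`-sublevel set, the soft-IQC finite-horizon lower bound, and the
disturbance energy bound imply `𝒱(T, x(T)) < γ + R²`. -/
theorem brs_soft_iqc_final_bound
    {n nψ nd nz : ℕ} (T γ R : ℝ) (hT : 0 < T) (hR : 0 < R)
    (M : Matrix (Fin nz) (Fin nz) ℝ) (hM : M.IsSymm)
    (Y22 : Matrix (Fin nψ) (Fin nψ) ℝ) (hY22 : Y22.IsSymm)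
    (V : ℝ × (Fin (n + nψ) → ℝ) → ℝ) (hV : ContDiff ℝ 1 V)
    (x : ℝ → Fin (n + nψ) → ℝ) (hx : ContDiff ℝ 1 x)
    (z : ℝ → Fin nz → ℝ) (hz : Continuous z)
    (d : ℝ → Fin nd → ℝ) (hd : Continuous d)
    -- the last nψ components of the state, i.e. the filter state x_ψ
    (xψ : ℝ → Fin nψ → ℝ) (hxψ : ∀ t i, xψ t i = x t (Fin.natAdd n i))
    -- the shifted storage function
    (𝒱 : ℝ → (Fin (n + nψ) → ℝ) → ℝ)
    (h𝒱 : ∀ t ξ, 𝒱 t ξ = V (t, ξ) -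
      ((fun i => ξ (Fin.natAdd n i)) ⬝ᵥ Y22.mulVec (fun i => ξ (Fin.natAdd n i))))
    (hdiss : ∀ t ∈ Icc (0:ℝ) T, 𝒱 t (x t) ≤ γ + R ^ 2 →
      deriv (fun s => V (s, x s)) t + z t ⬝ᵥ M.mulVec (z t) ≤ d t ⬝ᵥ d t)
    (h0 : V (0, x 0) ≤ γ)
    (hE : (∫ t in (0:ℝ)..T, d t ⬝ᵥ d t) < R ^ 2)
    (hIQC : ∀ t ∈ Icc (0:ℝ) T,
      -(xψ t ⬝ᵥ Y22.mulVec (xψ t)) ≤ ∫ τ in (0:ℝ)..t, z τ ⬝ᵥ M.mulVec (z τ)) :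
    𝒱 T (x T) < γ + R ^ 2 := by
  -- continuity of integrands
  have hzc : Continuous fun t => z t ⬝ᵥ M.mulVec (z t) := by
    simp only [dotProduct, Matrix.mulVec]
    fun_prop
  have hdc : Continuous fun t => d t ⬝ᵥ d t := by
    unfold dotProduct
    fun_prop
  set Iz : ℝ → ℝ := fun t => ∫ τ in (0:ℝ)..t, z τ ⬝ᵥ M.mulVec (z τ) with hIz
  set Idf : ℝ → ℝ := fun t => ∫ τ in (0:ℝ)..t, d τ ⬝ᵥ d τ with hIdf
  have hg : ContDiff ℝ 1 fun t => V (t, x t) := hV.comp (contDiff_id.prodMk hx)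
  have hgd : ∀ t, HasDerivAt (fun s => V (s, x s)) (deriv (fun s => V (s, x s)) t) t :=
    fun t => ((hg.differentiable one_ne_zero) t).hasDerivAt
  have hIzd : ∀ t, HasDerivAt Iz (z t ⬝ᵥ M.mulVec (z t)) t :=
    fun t => (hzc.integral_hasStrictDerivAt 0 t).hasDerivAt
  have hIdd : ∀ t, HasDerivAt Idf (d t ⬝ᵥ d t) t :=
    fun t => (hdc.integral_hasStrictDerivAt 0 t).hasDerivAt
  set F : ℝ → ℝ := fun t => V (t, x t) + Iz t - Idf t with hF
  have hFd : ∀ t, HasDerivAt F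
      (deriv (fun s => V (s, x s)) t + z t ⬝ᵥ M.mulVec (z t) - d t ⬝ᵥ d t) t :=
    fun t => ((hgd t).add (hIzd t)).sub (hIdd t)
  have hFdiff : Differentiable ℝ F := fun t => (hFd t).differentiableAt
  have hFc : Continuous F := hFdiff.continuous
  -- nonnegativity of d⬝d and monotonicity of Idf on [0,T]
  have hdd_nonneg : ∀ t, 0 ≤ d t ⬝ᵥ d t := by
    intro t
    exact Finset.sum_nonneg fun i _ => mul_self_nonneg _
  have hId_le : ∀ t ∈ Icc (0:ℝ) T, Idf t ≤ Idf T := by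
    intro t ht
    have hsplit : Idf t + (∫ τ in t..T, d τ ⬝ᵥ d τ) = Idf T :=
      intervalIntegral.integral_add_adjacent_intervals
        (hdc.intervalIntegrable 0 t) (hdc.intervalIntegrable t T)
    have hnn : 0 ≤ ∫ τ in t..T, d τ ⬝ᵥ d τ :=
      intervalIntegral.integral_nonneg ht.2 (fun τ _ => hdd_nonneg τ)
    linarith
  -- 𝒱 bound from F bound
  have h𝒱F : ∀ t ∈ Icc (0:ℝ) T, 𝒱 t (x t) ≤ F t + Idf T := by
    intro t ht
    have hIQC' := hIQC t ht
    have hψ : xψ t = fun i => x t (Fin.natAdd n i) := funext (hxψ t)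
    rw [hψ] at hIQC'
    have := h𝒱 t (x t)
    have hItle := hId_le t ht
    simp only [hF]
    linarith [hIQC']
  set δ : ℝ := R ^ 2 - Idf T with hδdef
  have hδ : 0 < δ := by simp only [hδdef, hIdf]; linarith
  -- derivative nonpositive on the sublevel set
  have hderiv_le : ∀ t ∈ Icc (0:ℝ) T, F t ≤ γ + δ → deriv F t ≤ 0 := by
    intro t ht hFt
    have h𝒱t : 𝒱 t (x t) ≤ γ + R ^ 2 := by
      have := h𝒱F t ht
      simp only [hδdef] at hFt
      linarith
    have hd' := hdiss t ht h𝒱t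
    have : deriv F t =
        deriv (fun s => V (s, x s)) t + z t ⬝ᵥ M.mulVec (z t) - d t ⬝ᵥ d t :=
      (hFd t).deriv
    linarith
  have hF0 : F 0 ≤ γ := by
    simp only [hF, hIz, hIdf, intervalIntegral.integral_same]
    linarith
  -- main claim: F T ≤ γ
  have hFT : F T ≤ γ := by
    by_contra hFT
    push_neg at hFT
    set ε : ℝ := min δ (F T - γ) with hεdef
    have hε : 0 < ε := lt_min hδ (by linarith)
    have hεδ : ε ≤ δ := min_le_left _ _
    -- last time F ≤ γ
    set B : Set ℝ := Icc 0 T ∩ F ⁻¹' Iic γ with hB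
    have hBne : B.Nonempty := ⟨0, ⟨le_refl 0, hT.le⟩, hF0⟩
    have hBclosed : IsClosed B := isClosed_Icc.inter (isClosed_Iic.preimage hFc)
    have hBbdd : BddAbove B := ⟨T, fun t ht => ht.1.2⟩
    set t₁ : ℝ := sSup B with ht₁def
    have ht₁B : t₁ ∈ B := hBclosed.csSup_mem hBne hBbdd
    have ht₁Icc : t₁ ∈ Icc (0:ℝ) T := ht₁B.1
    have hFt₁ : F t₁ ≤ γ := ht₁B.2
    -- first time after t₁ that F reaches γ + ε
    set A : Set ℝ := Icc t₁ T ∩ F ⁻¹' Ici (γ + ε) with hA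
    have hAne : A.Nonempty := ⟨T, ⟨ht₁Icc.2, le_refl T⟩, by
      have : ε ≤ F T - γ := min_le_right _ _
      simp only [mem_preimage, mem_Ici]; linarith⟩
    have hAclosed : IsClosed A := isClosed_Icc.inter (isClosed_Ici.preimage hFc)
    have hAbdd : BddBelow A := ⟨t₁, fun t ht => ht.1.1⟩
    set t₂ : ℝ := sInf A with ht₂def
    have ht₂A : t₂ ∈ A := hAclosed.csInf_mem hAne hAbdd
    have ht₁₂ : t₁ ≤ t₂ := ht₂A.1.1
    have ht₂T : t₂ ≤ T := ht₂A.1.2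
    have hFt₂ : γ + ε ≤ F t₂ := ht₂A.2
    -- F is antitone on [t₁, t₂]
    have hanti : AntitoneOn F (Icc t₁ t₂) := by
      apply antitoneOn_of_deriv_nonpos (convex_Icc _ _) hFc.continuousOn
        (hFdiff.differentiableOn)
      intro t htmem
      rw [interior_Icc] at htmem
      have htIcc : t ∈ Icc (0:ℝ) T := ⟨le_trans ht₁Icc.1 htmem.1.le, le_trans htmem.2.le ht₂T⟩
      have htnA : t ∉ A := fun hmem => absurd (csInf_le hAbdd hmem) (not_le.mpr htmem.2)
      have hFtlt : F t < γ + ε := by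
        by_contra hc
        push_neg at hc
        exact htnA ⟨⟨htmem.1.le, htIcc.2⟩, hc⟩
      exact hderiv_le t htIcc (by linarith)
    have : F t₂ ≤ F t₁ :=
      hanti ⟨le_refl t₁, ht₁₂⟩ ⟨ht₁₂, le_refl t₂⟩ ht₁₂
    linarith
  -- conclude
  have hfin := h𝒱F T ⟨hT.le, le_refl T⟩
  have : Idf T < R ^ 2 := hE
  linarith
end
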